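/- For each ε > 0, classical solutions of the discounted MFG system are unique: if (u₁, m₁) and (u₂, m₂) are classical solutions of the discounted MFG system for the same ε > 0, then u₁ = u₂ and m₁ = m₂ on T^d. (No assumptions beyond the standing hypotheses on g and V are needed; one uses that m > 0 for any classical solution and the integral identity ∫_{T^d} (m₁ − m₂)(g(m₁) − g(m₂)) + (1/2)(m₁ + m₂)|Du₁ − Du₂|² dx = 0.) -/

import Mathlib

open MeasureTheory Set

noncomputable def pd (d : ℕ) (i : Fin d) (f : (Fin d → ℝ) → ℝ) : (Fin d → ℝ) → ℝ :=
  fun x => fderiv ℝ f x (Pi.single i 1)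

noncomputable def gradSq (d : ℕ) (u : (Fin d → ℝ) → ℝ) (x : Fin d → ℝ) : ℝ :=
  ∑ i, pd d i u x ^ 2

noncomputable def divUp (d : ℕ) (m u : (Fin d → ℝ) → ℝ) (x : Fin d → ℝ) : ℝ :=
  ∑ i, pd d i (fun y => m y * pd d i u y) x

/-- `f` is `ℤ^d`-periodic, i.e. a function on the flat torus `T^d`. -/
def ZPer (d : ℕ) (f : (Fin d → ℝ) → ℝ) : Prop :=
  ∀ (x : Fin d → ℝ) (k : Fin d → ℤ), f (x + fun i => (k i : ℝ)) = f x

/-- `f` has finite `α`-Hölder seminorm. -/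
def HolderSemi (α : ℝ) {E : Type*} [PseudoMetricSpace E] (f : E → ℝ) : Prop :=
  ∃ C : ℝ, 0 ≤ C ∧ ∀ x y, |f x - f y| ≤ C * dist x y ^ α

/-- `f` is of class `C^{1,α}`. -/
def C1Hold (d : ℕ) (α : ℝ) (f : (Fin d → ℝ) → ℝ) : Prop :=
  ContDiff ℝ 1 f ∧ ∀ i, HolderSemi α (pd d i f)

/-- `f` is of class `C^{2,α}`. -/
def C2Hold (d : ℕ) (α : ℝ) (f : (Fin d → ℝ) → ℝ) : Prop :=
  ContDiff ℝ 2 f ∧ ∀ i j, HolderSemi α (pd d i (pd d j f))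

/-- `f` is locally `α`-Hölder on `s`. -/
def LocHolderOn (α : ℝ) (f : ℝ → ℝ) (s : Set ℝ) : Prop :=
  ∀ K : Set ℝ, IsCompact K → K ⊆ s →
    ∃ C : ℝ, 0 ≤ C ∧ ∀ x ∈ K, ∀ y ∈ K, |f x - f y| ≤ C * dist x y ^ α

/-- Standing hypotheses on `g`: strictly increasing and continuous on `[0,∞)`,
of class `C^{1,α}` on `(0,∞)`. -/
def Ghyp (α : ℝ) (g : ℝ → ℝ) : Prop :=
  StrictMonoOn g (Ici 0) ∧ ContinuousOn g (Ici 0) ∧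
    DifferentiableOn ℝ g (Ioi 0) ∧ LocHolderOn α (deriv g) (Ioi 0)

/-- Standing hypotheses on `V`: a `C^{1,α}` function on the torus. -/
def Vhyp (d : ℕ) (α : ℝ) (V : (Fin d → ℝ) → ℝ) : Prop :=
  ZPer d V ∧ C1Hold d α V

/-- The oscillation of `V` over the torus. -/
noncomputable def oscV (d : ℕ) (V : (Fin d → ℝ) → ℝ) : ℝ :=
  sSup (V '' Icc (0 : Fin d → ℝ) 1) - sInf (V '' Icc (0 : Fin d → ℝ) 1)

/-- Assumption (A1): `g⁻¹(g(1) − osc V) > 0`, i.e. `g(1) − osc V` is attained by `g` on `(0,∞)`. -/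
def A1 (d : ℕ) (g : ℝ → ℝ) (V : (Fin d → ℝ) → ℝ) : Prop :=
  g 1 - oscV d V ∈ g '' Ioi (0 : ℝ)

/-- Assumption (A2). -/
def A2 (g : ℝ → ℝ) : Prop :=
  ∃ C₁ C₂ β : ℝ, 0 < C₁ ∧ 0 < C₂ ∧
    (∀ z : ℝ, 0 < z → C₁ * z ^ β ≤ deriv g z) ∧
    (∀ z : ℝ, 0 ≤ z → g z ≤ C₂ + z * g z)

/-- A classical solution `(u, m)` of the discounted MFG system
`ε u + |Du|²/2 + V = g(m)`, `ε m − div(m Du) = ε` on `T^d`. -/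
structure DiscSol (d : ℕ) (α : ℝ) (g : ℝ → ℝ) (V : (Fin d → ℝ) → ℝ) (ε : ℝ)
    (u m : (Fin d → ℝ) → ℝ) : Prop where
  per_u : ZPer d u
  per_m : ZPer d m
  reg_u : C2Hold d α u
  reg_m : C1Hold d α m
  m_nonneg : ∀ x, 0 ≤ m x
  hj : ∀ x, ε * u x + (1 / 2) * gradSq d u x + V x = g (m x)
  fp : ∀ x, ε * m x - divUp d m u x = ε

/-- A classical solution `(u, m, H̄)` of the ergodic MFG system
`|Du|²/2 + V = g(m) + H̄`, `−div(m Du) = 0`, `m ≥ 0`, `∫ m = 1` on `T^d`. -/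
structure ErgSol (d : ℕ) (α : ℝ) (g : ℝ → ℝ) (V : (Fin d → ℝ) → ℝ)
    (u m : (Fin d → ℝ) → ℝ) (H : ℝ) : Prop where
  per_u : ZPer d u
  per_m : ZPer d m
  reg_u : C2Hold d α u
  reg_m : C1Hold d α m
  m_nonneg : ∀ x, 0 ≤ m x
  m_mass : (∫ x in Icc (0 : Fin d → ℝ) 1, m x) = 1
  hj : ∀ x, (1 / 2) * gradSq d u x + V x = g (m x) + H
  fp : ∀ x, divUp d m u x = 0


-- shift lemma
lemma fderiv_shift {E : Type*} [NormedAddCommGroup E] [NormedSpace ℝ E]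
    (f : E → ℝ) (c x : E) : fderiv ℝ (fun y => f (y + c)) x = fderiv ℝ f (x + c) := by
  by_cases h : DifferentiableAt ℝ f (x + c)
  · have h2 : HasFDerivAt (fun y : E => y + c) (ContinuousLinearMap.id ℝ E) x :=
      (hasFDerivAt_id x).add_const c
    have := (h.hasFDerivAt.comp x h2)
    simpa [Function.comp_def] using this.fderiv
  · rw [fderiv_zero_of_not_differentiableAt h, fderiv_zero_of_not_differentiableAt]
    intro hd
    apply h
    have : f = (fun y => f (y + c)) ∘ (fun y => y - c) := by
      funext y; simp
    rw [this]
    have h3 : DifferentiableAt ℝ (fun y : E => y - c) (x + c) :=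
      (differentiable_id.sub_const c).differentiableAt
    exact DifferentiableAt.comp (x + c) (by simpa using hd) h3

lemma ZPer.pdper {d : ℕ} {f : (Fin d → ℝ) → ℝ} (hf : ZPer d f) (i : Fin d) :
    ZPer d (pd d i f) := by
  intro x k
  show fderiv ℝ f _ _ = fderiv ℝ f _ _
  have : (fun y : Fin d → ℝ => f (y + fun i => (k i : ℝ))) = f := funext fun y => hf y k
  rw [← fderiv_shift f _ x, this]

lemma ZPer.reduce {d : ℕ} {f : (Fin d → ℝ) → ℝ} (hf : ZPer d f) (x : Fin d → ℝ) :
    ∃ y ∈ Icc (0 : Fin d → ℝ) 1, (∀ i, y i < 1) ∧ f x = f y := by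
  refine ⟨fun i => Int.fract (x i), ⟨fun i => Int.fract_nonneg _, fun i => (Int.fract_lt_one _).le⟩,
    fun i => Int.fract_lt_one _, ?_⟩
  have := hf (fun i => Int.fract (x i)) (fun i => ⌊x i⌋)
  rw [← this]
  congr 1
  funext i
  exact (Int.fract_add_floor (x i)).symm

lemma pd_mul {d : ℕ} {f g : (Fin d → ℝ) → ℝ} {x : Fin d → ℝ}
    (hf : DifferentiableAt ℝ f x) (hg : DifferentiableAt ℝ g x) (i : Fin d) :
    pd d i (fun y => f y * g y) x = pd d i f x * g x + f x * pd d i g x := by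
  show (fderiv ℝ (fun y => f y * g y) x) _ = _
  rw [fderiv_fun_mul hf hg]
  simp [pd]
  ring

lemma pd_sub {d : ℕ} {f g : (Fin d → ℝ) → ℝ} {x : Fin d → ℝ}
    (hf : DifferentiableAt ℝ f x) (hg : DifferentiableAt ℝ g x) (i : Fin d) :
    pd d i (fun y => f y - g y) x = pd d i f x - pd d i g x := by
  show (fderiv ℝ (fun y => f y - g y) x) _ = _
  rw [fderiv_fun_sub hf hg]
  simp [pd]

lemma contDiff_pd {d : ℕ} {u : (Fin d → ℝ) → ℝ} (hu : ContDiff ℝ 2 u) (i : Fin d) :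
    ContDiff ℝ 1 (pd d i u) := by
  have h := hu.fderiv_right (m := 1) (by norm_num)
  exact h.clm_apply contDiff_const

lemma continuous_pd {d : ℕ} {u : (Fin d → ℝ) → ℝ} (hu : ContDiff ℝ 1 u) (i : Fin d) :
    Continuous (pd d i u) := by
  have h := hu.continuous_fderiv one_ne_zero
  exact h.clm_apply continuous_const

lemma single_shift {n : ℕ} (i : Fin (n + 1)) (x : Fin n → ℝ) :
    Fin.insertNth i (1 : ℝ) x =
      Fin.insertNth i (0 : ℝ) x + fun t => ((Pi.single i 1 : Fin (n + 1) → ℤ) t : ℝ) := by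
  funext t
  rcases eq_or_ne t i with rfl | ht
  · simp
  · obtain ⟨j, rfl⟩ := Fin.exists_succAbove_eq ht
    simp [Pi.single_eq_of_ne ht]

lemma int_pd_zero {n : ℕ} (F : (Fin (n + 1) → ℝ) → ℝ) (hper : ZPer (n + 1) F)
    (hF : ContDiff ℝ 1 F) (i : Fin (n + 1)) :
    ∫ x in Icc (0 : Fin (n + 1) → ℝ) 1, pd (n + 1) i F x = 0 := by
  have hle : (0 : Fin (n + 1) → ℝ) ≤ 1 := fun _ => zero_le_one
  have hdiv := MeasureTheory.integral_divergence_of_hasFDerivAt_off_countable'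
    (0 : Fin (n + 1) → ℝ) 1 hle
    (fun j => if j = i then F else fun _ => 0)
    (fun j x => if j = i then fderiv ℝ F x else 0) ∅ countable_empty
    (fun j => by
      rcases eq_or_ne j i with rfl | hj
      · simpa using hF.continuous.continuousOn
      · simp [hj]; exact continuousOn_const)
    (fun x _ j => by
      rcases eq_or_ne j i with rfl | hj
      · simpa using (hF.differentiable one_ne_zero x).hasFDerivAt
      · simp [hj]; exact hasFDerivAt_const 0 x)
    ?_
  · have hsum : ∀ x : Fin (n + 1) → ℝ,
        (∑ j, (if j = i then fderiv ℝ F x else 0) (Pi.single j (1 : ℝ))) = pd (n + 1) i F x := by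
      intro x
      rw [Finset.sum_eq_single i]
      · simp [pd]
      · intro j _ hj; simp [hj]
      · intro h; exact absurd (Finset.mem_univ i) h
    rw [show (∫ x in Icc (0 : Fin (n + 1) → ℝ) 1, pd (n + 1) i F x)
        = ∫ x in Icc (0 : Fin (n + 1) → ℝ) 1,
            ∑ j, (if j = i then fderiv ℝ F x else 0) (Pi.single j (1 : ℝ)) from
      setIntegral_congr_fun measurableSet_Icc (fun x _ => (hsum x).symm)]
    rw [hdiv]
    apply Finset.sum_eq_zero
    intro j _
    rcases eq_or_ne j i with rfl | hj
    · have : ∀ x : Fin n → ℝ, F (Fin.insertNth j (1 : ℝ) x) = F (Fin.insertNth j (0 : ℝ) x) := by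
        intro x
        rw [single_shift j x]
        exact hper _ _
      simp only [eq_self_iff_true, if_true, Pi.one_apply, Pi.zero_apply]
      rw [setIntegral_congr_fun measurableSet_Icc (fun x _ => this x)]
      exact sub_self _
    · simp [hj]
  · have : ∀ x : Fin (n + 1) → ℝ,
        (∑ j, (if j = i then fderiv ℝ F x else 0) (Pi.single j (1 : ℝ))) = pd (n + 1) i F x := by
      intro x
      rw [Finset.sum_eq_single i]
      · simp [pd]
      · intro j _ hj; simp [hj]
      · intro h; exact absurd (Finset.mem_univ i) h
    apply MeasureTheory.IntegrableOn.congr_fun ?_ (fun x _ => (this x).symm) measurableSet_Icc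
    exact (continuous_pd hF i).integrableOn_Icc

lemma zero_of_nonneg_int {d : ℕ} (h : (Fin d → ℝ) → ℝ) (hcont : Continuous h)
    (hper : ZPer d h) (hnn : ∀ x, 0 ≤ h x)
    (hint : ∫ x in Icc (0 : Fin d → ℝ) 1, h x = 0) : ∀ x, h x = 0 := by
  have hint' : IntegrableOn h (Icc (0 : Fin d → ℝ) 1) := hcont.integrableOn_Icc
  have hae : h =ᵐ[volume.restrict (Icc (0 : Fin d → ℝ) 1)] 0 :=
    (MeasureTheory.setIntegral_eq_zero_iff_of_nonneg_ae
      (Filter.Eventually.of_forall fun x => hnn x) hint').mp hint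
  have hU : IsOpen {x : Fin d → ℝ | h x ≠ 0} := isOpen_ne.preimage hcont
  have hmeas : volume ({x : Fin d → ℝ | h x ≠ 0} ∩ Icc 0 1) = 0 := by
    have h0 := MeasureTheory.ae_iff.mp hae
    have h1 : {a : Fin d → ℝ | ¬ h a = (0 : (Fin d → ℝ) → ℝ) a} = {x : Fin d → ℝ | h x ≠ 0} := by
      ext a; simp
    rw [h1, MeasureTheory.Measure.restrict_apply hU.measurableSet] at h0
    exact h0
  have hV : IsOpen ({x : Fin d → ℝ | h x ≠ 0} ∩ pi univ fun _ => Ioo (0 : ℝ) 1) :=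
    hU.inter (isOpen_set_pi finite_univ fun _ _ => isOpen_Ioo)
  have hVempty : ({x : Fin d → ℝ | h x ≠ 0} ∩ pi univ fun _ => Ioo (0 : ℝ) 1) = ∅ := by
    have hsub : ({x : Fin d → ℝ | h x ≠ 0} ∩ pi univ fun _ => Ioo (0 : ℝ) 1)
        ⊆ {x : Fin d → ℝ | h x ≠ 0} ∩ Icc 0 1 := by
      apply inter_subset_inter_right
      rw [← pi_univ_Icc]
      exact pi_mono fun i _ => Ioo_subset_Icc_self
    have : volume ({x : Fin d → ℝ | h x ≠ 0} ∩ pi univ fun _ => Ioo (0 : ℝ) 1) = 0 :=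
      le_antisymm (hmeas ▸ measure_mono hsub) zero_le
    exact (hV.measure_eq_zero_iff volume).mp this
  have hIoo : EqOn h 0 (pi univ fun _ => Ioo (0 : ℝ) 1) := by
    intro x hx
    by_contra hne
    have hmem : x ∈ ({x : Fin d → ℝ | h x ≠ 0} ∩ pi univ fun _ => Ioo (0 : ℝ) 1) := ⟨hne, hx⟩
    rw [hVempty] at hmem
    exact hmem
  have hIcc : EqOn h 0 (Icc (0 : Fin d → ℝ) 1) := by
    have hcl : closure (pi univ fun _ : Fin d => Ioo (0 : ℝ) 1) = Icc (0 : Fin d → ℝ) 1 := by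
      rw [closure_pi_set, ← pi_univ_Icc]
      exact pi_congr rfl fun i _ => closure_Ioo one_ne_zero.symm
    rw [← hcl]
    exact hIoo.closure hcont continuous_const
  intro x
  obtain ⟨y, hy, -, hxy⟩ := hper.reduce x
  rw [hxy]
  exact hIcc hy

section KeyLemmas

variable {d : ℕ} {α : ℝ} {g : ℝ → ℝ} {V : (Fin d → ℝ) → ℝ} {ε : ℝ}
variable {u₁ m₁ u₂ m₂ : (Fin d → ℝ) → ℝ}

lemma key_pointwise (h1 : DiscSol d α g V ε u₁ m₁) (h2 : DiscSol d α g V ε u₂ m₂)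
    (x : Fin d → ℝ) :
    (m₁ x - m₂ x) * (g (m₁ x) - g (m₂ x))
      + (1 / 2) * (m₁ x + m₂ x) * ∑ i, (pd d i u₁ x - pd d i u₂ x) ^ 2
    = ∑ i, pd d i (fun y => (u₁ y - u₂ y) * (m₁ y * pd d i u₁ y - m₂ y * pd d i u₂ y)) x := by
  have du₁ : Differentiable ℝ u₁ := h1.reg_u.1.differentiable two_ne_zero
  have du₂ : Differentiable ℝ u₂ := h2.reg_u.1.differentiable two_ne_zero
  have dm₁ : Differentiable ℝ m₁ := h1.reg_m.1.differentiable one_ne_zero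
  have dm₂ : Differentiable ℝ m₂ := h2.reg_m.1.differentiable one_ne_zero
  have dpu₁ : ∀ i, Differentiable ℝ (pd d i u₁) :=
    fun i => (contDiff_pd h1.reg_u.1 i).differentiable one_ne_zero
  have dpu₂ : ∀ i, Differentiable ℝ (pd d i u₂) :=
    fun i => (contDiff_pd h2.reg_u.1 i).differentiable one_ne_zero
  have hrw : ∀ i, pd d i (fun y => (u₁ y - u₂ y) * (m₁ y * pd d i u₁ y - m₂ y * pd d i u₂ y)) x
      = (pd d i u₁ x - pd d i u₂ x) * (m₁ x * pd d i u₁ x - m₂ x * pd d i u₂ x)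
        + (u₁ x - u₂ x) * (pd d i (fun y => m₁ y * pd d i u₁ y) x
            - pd d i (fun y => m₂ y * pd d i u₂ y) x) := by
    intro i
    rw [pd_mul (f := fun y => u₁ y - u₂ y)
      (g := fun y => m₁ y * pd d i u₁ y - m₂ y * pd d i u₂ y) ((du₁ x).sub (du₂ x))
      (((dm₁ x).mul (dpu₁ i x)).sub ((dm₂ x).mul (dpu₂ i x))) i]
    rw [pd_sub (du₁ x) (du₂ x) i,
      pd_sub (f := fun y => m₁ y * pd d i u₁ y) (g := fun y => m₂ y * pd d i u₂ y)
        ((dm₁ x).mul (dpu₁ i x)) ((dm₂ x).mul (dpu₂ i x)) i]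
  have e1 : g (m₁ x) - g (m₂ x)
      = ε * (u₁ x - u₂ x) + (1 / 2) * (gradSq d u₁ x - gradSq d u₂ x) := by
    have := h1.hj x; have := h2.hj x; linarith
  have e2 : (∑ i, pd d i (fun y => m₁ y * pd d i u₁ y) x)
      - ∑ i, pd d i (fun y => m₂ y * pd d i u₂ y) x = ε * (m₁ x - m₂ x) := by
    have := h1.fp x; have := h2.fp x
    simp only [divUp] at *
    linarith
  calc (m₁ x - m₂ x) * (g (m₁ x) - g (m₂ x))
      + (1 / 2) * (m₁ x + m₂ x) * ∑ i, (pd d i u₁ x - pd d i u₂ x) ^ 2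
      = (m₁ x - m₂ x) * (ε * (u₁ x - u₂ x))
        + ((m₁ x - m₂ x) * ((1 / 2) * (gradSq d u₁ x - gradSq d u₂ x))
          + (1 / 2) * (m₁ x + m₂ x) * ∑ i, (pd d i u₁ x - pd d i u₂ x) ^ 2) := by
        rw [e1]; ring
    _ = (m₁ x - m₂ x) * (ε * (u₁ x - u₂ x))
        + ∑ i, (pd d i u₁ x - pd d i u₂ x) * (m₁ x * pd d i u₁ x - m₂ x * pd d i u₂ x) := by
        congr 1
        simp only [gradSq]
        rw [← Finset.sum_sub_distrib, Finset.mul_sum, Finset.mul_sum, Finset.mul_sum,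
          ← Finset.sum_add_distrib]
        apply Finset.sum_congr rfl
        intro i _
        ring
    _ = ∑ i, pd d i (fun y => (u₁ y - u₂ y) * (m₁ y * pd d i u₁ y - m₂ y * pd d i u₂ y)) x := by
        simp only [hrw]
        rw [Finset.sum_add_distrib, ← Finset.mul_sum, Finset.sum_sub_distrib, e2]
        ring

end KeyLemmas

section MainLemmas

variable {α : ℝ} {g : ℝ → ℝ} {ε : ℝ}

lemma m_eq {n : ℕ} {V : (Fin (n + 1) → ℝ) → ℝ} {u₁ m₁ u₂ m₂ : (Fin (n + 1) → ℝ) → ℝ}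
    (hg : Ghyp α g)
    (h1 : DiscSol (n + 1) α g V ε u₁ m₁) (h2 : DiscSol (n + 1) α g V ε u₂ m₂) :
    m₁ = m₂ := by
  have hψc1 : ∀ i : Fin (n + 1), ContDiff ℝ 1
      (fun y => (u₁ y - u₂ y) * (m₁ y * pd (n + 1) i u₁ y - m₂ y * pd (n + 1) i u₂ y)) := by
    intro i
    exact ((h1.reg_u.1.of_le one_le_two).sub (h2.reg_u.1.of_le one_le_two)).mul
      ((h1.reg_m.1.mul (contDiff_pd h1.reg_u.1 i)).sub
        (h2.reg_m.1.mul (contDiff_pd h2.reg_u.1 i)))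
  have hψper : ∀ i : Fin (n + 1), ZPer (n + 1)
      (fun y => (u₁ y - u₂ y) * (m₁ y * pd (n + 1) i u₁ y - m₂ y * pd (n + 1) i u₂ y)) := by
    intro i x k
    simp only [h1.per_u x k, h2.per_u x k, h1.per_m x k, h2.per_m x k,
      h1.per_u.pdper i x k, h2.per_u.pdper i x k]
  have hint : ∫ x in Icc (0 : Fin (n + 1) → ℝ) 1,
      ((m₁ x - m₂ x) * (g (m₁ x) - g (m₂ x))
        + (1 / 2) * (m₁ x + m₂ x) * ∑ i, (pd (n + 1) i u₁ x - pd (n + 1) i u₂ x) ^ 2) = 0 := by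
    rw [setIntegral_congr_fun measurableSet_Icc (fun x _ => key_pointwise h1 h2 x)]
    rw [MeasureTheory.integral_finset_sum _ (fun i _ =>
      (continuous_pd (hψc1 i) i).integrableOn_Icc)]
    exact Finset.sum_eq_zero fun i _ => int_pd_zero _ (hψper i) (hψc1 i) i
  have hterm1 : ∀ x, 0 ≤ (m₁ x - m₂ x) * (g (m₁ x) - g (m₂ x)) := by
    intro x
    rcases lt_trichotomy (m₁ x) (m₂ x) with hlt | heq | hgt
    · have := hg.1 (h1.m_nonneg x) (h2.m_nonneg x) hlt
      nlinarith
    · rw [heq]; simp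
    · have := hg.1 (h2.m_nonneg x) (h1.m_nonneg x) hgt
      nlinarith
  have hterm2 : ∀ x : Fin (n + 1) → ℝ,
      0 ≤ (1 / 2) * (m₁ x + m₂ x) * ∑ i, (pd (n + 1) i u₁ x - pd (n + 1) i u₂ x) ^ 2 := by
    intro x
    apply mul_nonneg (mul_nonneg (by norm_num) (by
      have := h1.m_nonneg x; have := h2.m_nonneg x; linarith))
    exact Finset.sum_nonneg fun i _ => sq_nonneg _
  have hgm : ∀ (m : (Fin (n + 1) → ℝ) → ℝ), ContDiff ℝ 1 m → (∀ x, 0 ≤ m x) →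
      Continuous (fun x => g (m x)) := by
    intro m hm hmn
    exact ContinuousOn.comp_continuous hg.2.1 hm.continuous hmn
  have hcont : Continuous (fun x => (m₁ x - m₂ x) * (g (m₁ x) - g (m₂ x))
      + (1 / 2) * (m₁ x + m₂ x) * ∑ i, (pd (n + 1) i u₁ x - pd (n + 1) i u₂ x) ^ 2) := by
    have c₁ := h1.reg_m.1.continuous
    have c₂ := h2.reg_m.1.continuous
    have cg₁ := hgm m₁ h1.reg_m.1 h1.m_nonneg
    have cg₂ := hgm m₂ h2.reg_m.1 h2.m_nonneg
    have csum : Continuous (fun x : Fin (n + 1) → ℝ => ∑ i, (pd (n + 1) i u₁ x - pd (n + 1) i u₂ x) ^ 2) := by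
      apply continuous_finset_sum
      intro i _
      exact ((continuous_pd (h1.reg_u.1.of_le one_le_two) i).sub
        (continuous_pd (h2.reg_u.1.of_le one_le_two) i)).pow 2
    exact ((c₁.sub c₂).mul (cg₁.sub cg₂)).add ((continuous_const.mul (c₁.add c₂)).mul csum)
  have hper : ZPer (n + 1) (fun x => (m₁ x - m₂ x) * (g (m₁ x) - g (m₂ x))
      + (1 / 2) * (m₁ x + m₂ x) * ∑ i, (pd (n + 1) i u₁ x - pd (n + 1) i u₂ x) ^ 2) := by
    intro x k
    simp only [h1.per_m x k, h2.per_m x k, h1.per_u.pdper _ x k, h2.per_u.pdper _ x k]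
  have hzero := zero_of_nonneg_int _ hcont hper
    (fun x => add_nonneg (hterm1 x) (hterm2 x)) hint
  funext x
  have hx := hzero x
  have h0 : (m₁ x - m₂ x) * (g (m₁ x) - g (m₂ x)) = 0 := by
    have := hterm1 x; have := hterm2 x; linarith
  by_contra hne
  rcases lt_or_gt_of_ne hne with hlt | hgt
  · have := hg.1 (h1.m_nonneg x) (h2.m_nonneg x) hlt
    nlinarith
  · have := hg.1 (h2.m_nonneg x) (h1.m_nonneg x) hgt
    nlinarith

end MainLemmas

section UEq

variable {d : ℕ} {α : ℝ} {g : ℝ → ℝ} {V : (Fin d → ℝ) → ℝ} {ε : ℝ}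
variable {u₁ m₁ u₂ m₂ : (Fin d → ℝ) → ℝ}

lemma u_le (hε : 0 < ε)
    (h1 : DiscSol d α g V ε u₁ m₁) (h2 : DiscSol d α g V ε u₂ m₂)
    (hm : m₁ = m₂) : ∀ x, u₁ x ≤ u₂ x := by
  have du₁ : Differentiable ℝ u₁ := h1.reg_u.1.differentiable two_ne_zero
  have du₂ : Differentiable ℝ u₂ := h2.reg_u.1.differentiable two_ne_zero
  have hwper : ZPer d (fun y => u₁ y - u₂ y) := by
    intro x k
    simp only [h1.per_u x k, h2.per_u x k]
  have hwc : Continuous (fun y => u₁ y - u₂ y) :=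
    (du₁.continuous).sub (du₂.continuous)
  obtain ⟨x₀, -, hx₀⟩ := (isCompact_Icc (a := (0 : Fin d → ℝ)) (b := 1)).exists_isMaxOn
    (nonempty_Icc.mpr (fun _ => zero_le_one)) hwc.continuousOn
  have hglobal : ∀ y, u₁ y - u₂ y ≤ u₁ x₀ - u₂ x₀ := by
    intro y
    obtain ⟨z, hz, -, hyz⟩ := hwper.reduce y
    calc u₁ y - u₂ y = u₁ z - u₂ z := hyz
    _ ≤ u₁ x₀ - u₂ x₀ := hx₀ hz
  have hmax : IsLocalMax (fun y => u₁ y - u₂ y) x₀ :=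
    Filter.Eventually.of_forall hglobal
  have hf0 : fderiv ℝ (fun y => u₁ y - u₂ y) x₀ = 0 := hmax.fderiv_eq_zero
  have hpd : ∀ i, pd d i u₁ x₀ = pd d i u₂ x₀ := by
    intro i
    have := pd_sub (du₁ x₀) (du₂ x₀) i
    have h0 : pd d i (fun y => u₁ y - u₂ y) x₀ = 0 := by
      show (fderiv ℝ (fun y => u₁ y - u₂ y) x₀) _ = 0
      rw [hf0]; rfl
    rw [h0] at this
    linarith
  have hS : gradSq d u₁ x₀ = gradSq d u₂ x₀ := by
    simp only [gradSq]
    exact Finset.sum_congr rfl fun i _ => by rw [hpd i]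
  have hw0 : u₁ x₀ - u₂ x₀ = 0 := by
    have e1 := h1.hj x₀
    have e2 := h2.hj x₀
    rw [hm] at e1
    have : ε * (u₁ x₀ - u₂ x₀) = 0 := by
      rw [hS] at e1
      linarith
    have := mul_eq_zero.mp this
    rcases this with h | h
    · exact absurd h (ne_of_gt hε)
    · exact h
  intro x
  have := hglobal x
  linarith

end UEq


theorem stmt8 (d : ℕ) (α : ℝ) (hα0 : 0 < α) (hα1 : α < 1)
    (g : ℝ → ℝ) (V : (Fin d → ℝ) → ℝ) (hg : Ghyp α g) (hV : Vhyp d α V)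
    (ε : ℝ) (hε : 0 < ε) (u₁ m₁ u₂ m₂ : (Fin d → ℝ) → ℝ)
    (h1 : DiscSol d α g V ε u₁ m₁) (h2 : DiscSol d α g V ε u₂ m₂) :
    u₁ = u₂ ∧ m₁ = m₂ := by
  cases d with
  | zero =>
    have hm : m₁ = m₂ := by
      funext x
      have f1 := h1.fp x
      have f2 := h2.fp x
      simp only [divUp, Finset.univ_eq_empty, Finset.sum_empty] at f1 f2
      have h' : ε * m₁ x = ε * m₂ x := by linarith
      exact mul_left_cancel₀ (ne_of_gt hε) h'
    refine ⟨?_, hm⟩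
    funext x
    have e1 := h1.hj x
    have e2 := h2.hj x
    rw [hm] at e1
    simp only [gradSq, Finset.univ_eq_empty, Finset.sum_empty] at e1 e2
    have h' : ε * u₁ x = ε * u₂ x := by linarith
    exact mul_left_cancel₀ (ne_of_gt hε) h'
  | succ n =>
    have hm := m_eq hg h1 h2
    exact ⟨funext fun x => le_antisymm (u_le hε h1 h2 hm x) (u_le hε h2 h1 hm.symm x), hm⟩
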